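/- arXiv:2406.00575 — 2 statements merged into one kernel-verified Lean document; each statement's English description precedes it below -/
import Mathlib

section
/- Suppose λ > 0. Let (T, Y) be a mild solution of the wildfire system on [0, t*] with bounded initial data (T_0, Y_0), Y_0 ≥ 0. Then for every t ∈ [0, t*]: ‖T(·,t)‖_{L^∞(ℝ^d)} ≤ e^{−λt} ‖T_0‖_{L^∞(ℝ^d)} + λ^{−1} ‖Y_0‖_{L^∞(ℝ^d)}. -/
open MeasureTheory Real Set Filter ENNReal

noncomputable section

/-- Euclidean space `ℝ^d`. -/
abbrev Rd (d : ℕ) := EuclideanSpace ℝ (Fin d)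

/-- The Arrhenius reaction rate: `r(T) = exp(-1/T)` for `T > 0`, `0` otherwise. -/
noncomputable def rrate (T : ℝ) : ℝ := if 0 < T then Real.exp (-1 / T) else 0

/-- The heat semigroup `e^{tΔ}φ`, given by convolution with the heat kernel
`Φ_t(x) = (4πt)^{-d/2} exp(-|x|²/(4t))` for `t ≠ 0`, and the identity at `t = 0`. -/
noncomputable def heatConv (d : ℕ) (t : ℝ) (φ : Rd d → ℝ) : Rd d → ℝ :=
  if t = 0 then φ
  else fun x => ∫ y : Rd d,
    (4 * Real.pi * t) ^ (-(d : ℝ) / 2) * Real.exp (-‖x - y‖ ^ 2 / (4 * t)) * φ y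

/-- The Duhamel representative of the temperature at time `t`:
`e^{-λt} e^{tΔ} T₀ + ∫₀ᵗ e^{-λ(t-τ)} e^{(t-τ)Δ}[Y(·,τ) r(T(·,τ))] dτ`. -/
noncomputable def duhamelRep (d : ℕ) (lam : ℝ) (T0 : Rd d → ℝ)
    (T Y : Rd d → ℝ → ℝ) (t : ℝ) (x : Rd d) : ℝ :=
  Real.exp (-lam * t) * heatConv d t T0 x
    + ∫ τ in Set.Ioc (0 : ℝ) t,
        Real.exp (-lam * (t - τ)) *
          heatConv d (t - τ) (fun y => Y y τ * rrate (T y τ)) x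

/-- Continuity of the curve `t ↦ T(·,t)` into `L^p(ℝ^d)`, on the time set `I`. -/
def ContinuousIntoLp (d : ℕ) (p : ℝ≥0∞) (I : Set ℝ) (T : Rd d → ℝ → ℝ) : Prop :=
  ∀ t₀ ∈ I, Filter.Tendsto (fun t => eLpNorm (fun x => T x t - T x t₀) p volume)
    (nhdsWithin t₀ I) (nhds 0)

/-- A mild solution `(T, Y)` of the wildfire reaction-diffusion system
`T_t = (Δ - λ)T + Y r(T)`, `Y_t = -β Y r(T)` with data `(T₀, Y₀)`, on the time set `I`:
the temperature satisfies the Duhamel formula (a.e. in `x`) and the fuel satisfies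
`Y(x,t) = Y₀(x) exp(-β ∫₀ᵗ r(T(x,σ)) dσ)`, with both curves continuous into `L^∞`. -/
structure IsMildSolutionOn (d : ℕ) (lam beta : ℝ) (I : Set ℝ)
    (T0 Y0 : Rd d → ℝ) (T Y : Rd d → ℝ → ℝ) : Prop where
  meas_T0 : Measurable T0
  meas_Y0 : Measurable Y0
  bdd_T0 : eLpNorm T0 ⊤ volume < ⊤
  bdd_Y0 : eLpNorm Y0 ⊤ volume < ⊤
  meas_T : ∀ t ∈ I, Measurable fun x => T x t
  meas_Y : ∀ t ∈ I, Measurable fun x => Y x t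
  cont_T : ContinuousIntoLp d ⊤ I T
  cont_Y : ContinuousIntoLp d ⊤ I Y
  duhamel : ∀ t ∈ I, (fun x => T x t) =ᵐ[volume] duhamelRep d lam T0 T Y t
  fuel : ∀ x, ∀ t ∈ I,
    Y x t = Y0 x * Real.exp (-beta * ∫ σ in Set.Ioc (0 : ℝ) t, rrate (T x σ))

/-- The `X_{t*}`-norm: `sup_{t ∈ I} [(1+t)^{d/2} ‖T(·,t)‖_{L^∞} + ‖T(·,t)‖_{L¹}]`. -/
noncomputable def XnormOn (d : ℕ) (I : Set ℝ) (T : Rd d → ℝ → ℝ) : ℝ≥0∞ :=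
  ⨆ t ∈ I, (ENNReal.ofReal ((1 + t) ^ ((d : ℝ) / 2)) * eLpNorm (fun x => T x t) ⊤ volume
    + eLpNorm (fun x => T x t) 1 volume)

end

lemma rrate_nonneg (T : ℝ) : 0 ≤ rrate T := by
  unfold rrate; split
  · positivity
  · exact le_refl 0

lemma rrate_le_one (T : ℝ) : rrate T ≤ 1 := by
  unfold rrate; split
  · rename_i h
    apply Real.exp_le_one_iff.mpr
    rw [neg_div]
    exact neg_nonpos.mpr (by positivity)
  · norm_num

lemma gauss_integrable (d : ℕ) {t : ℝ} (ht : 0 < t) (x : Rd d) :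
    Integrable (fun y : Rd d =>
      (4 * π * t) ^ (-(d : ℝ) / 2) * rexp (-‖x - y‖ ^ 2 / (4 * t))) := by
  have hb : (0 : ℝ) < (4 * t)⁻¹ := by positivity
  have h : Integrable (fun v : Rd d => rexp (-(4 * t)⁻¹ * ‖v‖ ^ 2)) := by
    have h := (GaussianFourier.integrable_cexp_neg_mul_sq_norm_add (V := Rd d)
      (b := ((4 * t)⁻¹ : ℂ)) (by simpa using hb) 0 0).norm
    convert h using 2 with v
    simp [Complex.norm_exp]
    norm_cast
    left; rfl
  have h2 := (h.comp_sub_left x).const_mul ((4 * π * t) ^ (-(d : ℝ) / 2))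
  convert h2 using 2 with y
  congr 1
  ring

lemma gauss_integral (d : ℕ) {t : ℝ} (ht : 0 < t) (x : Rd d) :
    ∫ y : Rd d, (4 * π * t) ^ (-(d : ℝ) / 2) * rexp (-‖x - y‖ ^ 2 / (4 * t)) = 1 := by
  have hb : (0 : ℝ) < (4 * t)⁻¹ := by positivity
  have e1 : ∀ y : Rd d, (4 * π * t) ^ (-(d : ℝ) / 2) * rexp (-‖x - y‖ ^ 2 / (4 * t))
      = (4 * π * t) ^ (-(d : ℝ) / 2) * rexp (-(4 * t)⁻¹ * ‖x - y‖ ^ 2) := by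
    intro y; congr 1; congr 1; ring
  simp_rw [e1]
  rw [integral_const_mul,
    integral_sub_left_eq_self (fun v : Rd d => rexp (-(4 * t)⁻¹ * ‖v‖ ^ 2)) volume x,
    GaussianFourier.integral_rexp_neg_mul_sq_norm hb]
  have : (π / (4 * t)⁻¹) = 4 * π * t := by field_simp
  rw [this]
  have h4 : (0 : ℝ) < 4 * π * t := by positivity
  rw [show (Module.finrank ℝ (Rd d) : ℝ) = (d : ℝ) by simp]
  rw [← Real.rpow_add h4, show (-(d:ℝ) / 2 + (d:ℝ) / 2) = 0 by ring, Real.rpow_zero]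

lemma heatConv_bound (d : ℕ) {t : ℝ} (ht : 0 < t) {φ : Rd d → ℝ} {M : ℝ}
    (hM : 0 ≤ M) (hφ : ∀ᵐ y, ‖φ y‖ ≤ M) (x : Rd d) :
    ‖heatConv d t φ x‖ ≤ M := by
  rw [heatConv, if_neg ht.ne']
  have hKnn : ∀ y : Rd d, 0 ≤ (4 * π * t) ^ (-(d : ℝ) / 2) * rexp (-‖x - y‖ ^ 2 / (4 * t)) :=
    fun y => by positivity
  have hKi := gauss_integrable d ht x
  calc ‖∫ y : Rd d, (4 * π * t) ^ (-(d : ℝ) / 2) * rexp (-‖x - y‖ ^ 2 / (4 * t)) * φ y‖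
      ≤ ∫ y : Rd d, ‖(4 * π * t) ^ (-(d : ℝ) / 2) * rexp (-‖x - y‖ ^ 2 / (4 * t)) * φ y‖ :=
        norm_integral_le_integral_norm _
    _ ≤ ∫ y : Rd d, (4 * π * t) ^ (-(d : ℝ) / 2) * rexp (-‖x - y‖ ^ 2 / (4 * t)) * M := by
        apply integral_mono_of_nonneg (ae_of_all _ fun y => norm_nonneg _) (hKi.mul_const M)
        filter_upwards [hφ] with y hy
        rw [norm_mul, norm_of_nonneg (hKnn y)]
        exact mul_le_mul_of_nonneg_left hy (hKnn y)
    _ = (∫ y : Rd d, (4 * π * t) ^ (-(d : ℝ) / 2) * rexp (-‖x - y‖ ^ 2 / (4 * t))) * M :=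
        integral_mul_const _ _
    _ = M := by rw [gauss_integral d ht x, one_mul]

lemma exp_integral_le (lam : ℝ) (hlam : 0 < lam) {t : ℝ} (ht : 0 ≤ t) :
    ∫ τ in Set.Ioc (0 : ℝ) t, rexp (-lam * (t - τ)) ≤ lam⁻¹ := by
  have h : ∫ τ in Set.Ioc (0 : ℝ) t, rexp (-lam * (t - τ))
      = lam⁻¹ * rexp (-lam * (t - t)) - lam⁻¹ * rexp (-lam * (t - 0)) := by
    rw [← intervalIntegral.integral_of_le ht]
    apply intervalIntegral.integral_eq_sub_of_hasDerivAt
      (f := fun τ : ℝ => lam⁻¹ * rexp (-lam * (t - τ)))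
    · intro τ hτ
      have h1 : HasDerivAt (fun τ : ℝ => -lam * (t - τ)) lam τ := by
        have := ((hasDerivAt_id τ).const_sub t).const_mul (-lam)
        simpa using this
      have h2 := (h1.exp).const_mul lam⁻¹
      convert h2 using 1
      · rfl
      · field_simp
    · apply Continuous.intervalIntegrable
      continuity
  rw [h]
  have := Real.exp_pos (-lam * (t - 0))
  have hli : 0 ≤ lam⁻¹ := by positivity
  have hle : rexp (-lam * (t - t)) ≤ 1 := by simp
  nlinarith

/-- For `λ > 0` and a mild solution on `[0,t*]` with bounded data and
`Y₀ ≥ 0`: `‖T(·,t)‖_{L^∞} ≤ e^{-λt} ‖T₀‖_{L^∞} + λ⁻¹ ‖Y₀‖_{L^∞}` for all `t ∈ [0,t*]`. -/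
theorem temperature_linfty_bound
    (d : ℕ) (hd : 1 ≤ d) (lam beta : ℝ) (hlam : 0 < lam) (hbeta : 0 ≤ beta)
    (tstar : ℝ) (htstar : 0 < tstar)
    (T0 Y0 : Rd d → ℝ) (T Y : Rd d → ℝ → ℝ)
    (hY0 : ∀ x, 0 ≤ Y0 x)
    (hsol : IsMildSolutionOn d lam beta (Set.Icc 0 tstar) T0 Y0 T Y) :
    ∀ t ∈ Set.Icc (0 : ℝ) tstar,
      eLpNorm (fun x => T x t) ⊤ volume
        ≤ ENNReal.ofReal (Real.exp (-lam * t)) * eLpNorm T0 ⊤ volume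
          + ENNReal.ofReal lam⁻¹ * eLpNorm Y0 ⊤ volume := by
  intro t htI
  obtain ⟨ht0, htt⟩ := htI
  set MT := (eLpNorm T0 ⊤ volume).toReal with hMT
  set MY := (eLpNorm Y0 ⊤ volume).toReal with hMY
  have hMTnn : 0 ≤ MT := ENNReal.toReal_nonneg
  have hMYnn : 0 ≤ MY := ENNReal.toReal_nonneg
  have hT0b : ∀ᵐ x, ‖T0 x‖ ≤ MT := by
    filter_upwards [enorm_ae_le_eLpNormEssSup T0 volume] with x hx
    have hx' : (‖T0 x‖₊ : ℝ≥0∞) ≤ eLpNorm T0 ⊤ volume := by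
      rwa [eLpNorm_exponent_top]
    calc ‖T0 x‖ = ((‖T0 x‖₊ : ℝ≥0∞)).toReal := by simp
      _ ≤ MT := ENNReal.toReal_mono hsol.bdd_T0.ne hx'
  have hY0b : ∀ᵐ x, ‖Y0 x‖ ≤ MY := by
    filter_upwards [enorm_ae_le_eLpNormEssSup Y0 volume] with x hx
    have hx' : (‖Y0 x‖₊ : ℝ≥0∞) ≤ eLpNorm Y0 ⊤ volume := by
      rwa [eLpNorm_exponent_top]
    calc ‖Y0 x‖ = ((‖Y0 x‖₊ : ℝ≥0∞)).toReal := by simp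
      _ ≤ MY := ENNReal.toReal_mono hsol.bdd_Y0.ne hx'
  have hYr : ∀ τ ∈ Set.Icc (0:ℝ) tstar, ∀ᵐ y, ‖Y y τ * rrate (T y τ)‖ ≤ MY := by
    intro τ hτ
    filter_upwards [hY0b] with y hy
    rw [hsol.fuel y τ hτ]
    have hint : 0 ≤ ∫ σ in Set.Ioc (0:ℝ) τ, rrate (T y σ) :=
      integral_nonneg fun σ => rrate_nonneg _
    have hexp : rexp (-beta * ∫ σ in Set.Ioc (0:ℝ) τ, rrate (T y σ)) ≤ 1 :=
      Real.exp_le_one_iff.mpr (by nlinarith)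
    have hexp0 : (0:ℝ) < rexp (-beta * ∫ σ in Set.Ioc (0:ℝ) τ, rrate (T y σ)) :=
      Real.exp_pos _
    rw [norm_mul, norm_mul, Real.norm_eq_abs
      (rexp (-beta * ∫ σ in Set.Ioc (0:ℝ) τ, rrate (T y σ))), abs_of_pos hexp0,
      Real.norm_eq_abs (rrate (T y τ)), abs_of_nonneg (rrate_nonneg _)]
    calc ‖Y0 y‖ * rexp (-beta * ∫ σ in Set.Ioc (0:ℝ) τ, rrate (T y σ)) * rrate (T y τ)
        ≤ MY * 1 * 1 := by
          apply mul_le_mul _ (rrate_le_one _) (rrate_nonneg _) (by nlinarith)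
          exact mul_le_mul hy hexp hexp0.le hMYnn
      _ = MY := by ring
  have h1 : ∀ᵐ x, ‖rexp (-lam * t) * heatConv d t T0 x‖ ≤ rexp (-lam * t) * MT := by
    rcases eq_or_lt_of_le ht0 with h0 | h0
    · filter_upwards [hT0b] with x hx
      rw [heatConv, if_pos h0.symm, norm_mul, Real.norm_eq_abs (rexp (-lam * t)),
        abs_of_pos (Real.exp_pos _)]
      exact mul_le_mul_of_nonneg_left hx (Real.exp_pos _).le
    · refine ae_of_all _ fun x => ?_
      rw [norm_mul, Real.norm_eq_abs (rexp (-lam * t)), abs_of_pos (Real.exp_pos _)]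
      exact mul_le_mul_of_nonneg_left (heatConv_bound d h0 hMTnn hT0b x) (Real.exp_pos _).le
  have h2 : ∀ x : Rd d, ‖∫ τ in Set.Ioc (0:ℝ) t, rexp (-lam * (t - τ)) *
      heatConv d (t - τ) (fun y => Y y τ * rrate (T y τ)) x‖ ≤ lam⁻¹ * MY := by
    intro x
    have hne : ∀ᵐ τ : ℝ, τ ≠ t := by
      rw [ae_iff]
      simpa using measure_singleton t
    calc ‖∫ τ in Set.Ioc (0:ℝ) t, rexp (-lam * (t - τ)) *
          heatConv d (t - τ) (fun y => Y y τ * rrate (T y τ)) x‖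
        ≤ ∫ τ in Set.Ioc (0:ℝ) t, ‖rexp (-lam * (t - τ)) *
          heatConv d (t - τ) (fun y => Y y τ * rrate (T y τ)) x‖ :=
          norm_integral_le_integral_norm _
      _ ≤ ∫ τ in Set.Ioc (0:ℝ) t, rexp (-lam * (t - τ)) * MY := by
          apply integral_mono_of_nonneg (ae_of_all _ fun τ => norm_nonneg _)
          · exact Continuous.integrableOn_Ioc (by continuity)
          · filter_upwards [ae_restrict_of_ae hne, ae_restrict_mem measurableSet_Ioc]
              with τ hτne hτmem
            have htτ : 0 < t - τ :=
              lt_of_le_of_ne (sub_nonneg.mpr hτmem.2) fun h => hτne (by linarith)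
            rw [norm_mul, Real.norm_eq_abs (rexp (-lam * (t - τ))),
              abs_of_pos (Real.exp_pos _)]
            refine mul_le_mul_of_nonneg_left ?_ (Real.exp_pos _).le
            exact heatConv_bound d htτ hMYnn
              (hYr τ ⟨hτmem.1.le, hτmem.2.trans htt⟩) x
      _ = (∫ τ in Set.Ioc (0:ℝ) t, rexp (-lam * (t - τ))) * MY := integral_mul_const _ _
      _ ≤ lam⁻¹ * MY := mul_le_mul_of_nonneg_right (exp_integral_le lam hlam ht0) hMYnn
  have key : ∀ᵐ x, ‖T x t‖ ≤ rexp (-lam * t) * MT + lam⁻¹ * MY := by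
    filter_upwards [hsol.duhamel t ⟨ht0, htt⟩, h1] with x hdx hx1
    have hdx' : T x t = duhamelRep d lam T0 T Y t x := hdx
    rw [hdx']
    unfold duhamelRep
    exact (norm_add_le _ _).trans (add_le_add hx1 (h2 x))
  have hfin : eLpNorm (fun x => T x t) ⊤ volume
      ≤ ENNReal.ofReal (rexp (-lam * t) * MT + lam⁻¹ * MY) := by
    rw [eLpNorm_exponent_top]
    exact eLpNormEssSup_le_of_ae_bound key
  refine hfin.trans_eq ?_
  rw [ENNReal.ofReal_add (by positivity) (by positivity),
    ENNReal.ofReal_mul (Real.exp_pos (-lam*t)).le,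
    ENNReal.ofReal_mul (inv_nonneg.mpr hlam.le),
    hMT, hMY, ENNReal.ofReal_toReal hsol.bdd_T0.ne, ENNReal.ofReal_toReal hsol.bdd_Y0.ne]
end

section
/- Suppose λ > 0. Let (T, Y) be a mild solution of the wildfire system on [0, t*] with initial data T_0 ∈ L²(ℝ^d) ∩ L^∞(ℝ^d), Y_0 ∈ L^∞(ℝ^d), Y_0 ≥ 0, and with T(·,t) ∈ L²(ℝ^d) ∩ L^∞(ℝ^d) continuously in t. Then there exists an absolute constant C ≥ 1 such that for all t ∈ [0, t*]: ‖T(·,t)‖_{L²(ℝ^d)}² ≤ C ‖T_0‖_{L²(ℝ^d)}² · exp((C ‖Y_0‖_{L^∞(ℝ^d)} − λ) t). -/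
open MeasureTheory Real Set Filter ENNReal

noncomputable section AuxWF

namespace WF

def hk (d : ℕ) (t : ℝ) (z : Rd d) : ℝ :=
  (4 * Real.pi * t) ^ (-(d : ℝ) / 2) * Real.exp (-‖z‖ ^ 2 / (4 * t))

lemma hk_nonneg (d : ℕ) {t : ℝ} (ht : 0 < t) (z : Rd d) : 0 ≤ hk d t z := by
  have h1 : (0:ℝ) < 4 * Real.pi * t := by positivity
  exact mul_nonneg (Real.rpow_nonneg h1.le _) (Real.exp_nonneg _)

lemma hk_meas (d : ℕ) (t : ℝ) : Measurable (hk d t) := by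
  apply Measurable.mul measurable_const
  exact (measurable_norm.pow measurable_const).neg.div_const _ |>.exp

lemma integrable_rexp_neg_mul_sq_norm (d : ℕ) {b : ℝ} (hb : 0 < b) :
    Integrable (fun z : Rd d => Real.exp (-b * ‖z‖ ^ 2)) volume := by
  have h := (GaussianFourier.integrable_cexp_neg_mul_sq_norm_add
      (V := Rd d) (b := (b : ℂ)) (by simpa using hb) 0 0).re
  refine h.congr (Filter.Eventually.of_forall fun z => ?_)
  have h2 : (-(b:ℂ) * (‖z‖:ℂ)^2 + 0 * ((inner ℝ (0 : Rd d) z : ℝ) : ℂ)) = ((-b * ‖z‖^2 : ℝ) : ℂ) := by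
    push_cast; ring
  show RCLike.re (Complex.exp _) = _
  rw [h2, ← Complex.ofReal_exp]
  rfl

lemma hk_eq (d : ℕ) {t : ℝ} (ht : 0 < t) (z : Rd d) :
    hk d t z = (4 * Real.pi * t) ^ (-(d : ℝ) / 2) *
      Real.exp (-(1/(4*t)) * ‖z‖ ^ 2) := by
  unfold hk
  congr 2
  field_simp

lemma hk_integrable (d : ℕ) {t : ℝ} (ht : 0 < t) : Integrable (hk d t) volume := by
  have hb : (0:ℝ) < 1 / (4 * t) := by positivity
  have h := (integrable_rexp_neg_mul_sq_norm d hb).const_mul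
      ((4 * Real.pi * t) ^ (-(d : ℝ) / 2))
  exact h.congr (Filter.Eventually.of_forall fun z => (hk_eq d ht z).symm)

lemma hk_integral (d : ℕ) {t : ℝ} (ht : 0 < t) : ∫ z : Rd d, hk d t z = 1 := by
  have hb : (0:ℝ) < 1 / (4 * t) := by positivity
  simp_rw [show ∀ z : Rd d, hk d t z = _ from hk_eq d ht]
  rw [MeasureTheory.integral_const_mul, GaussianFourier.integral_rexp_neg_mul_sq_norm hb]
  rw [finrank_euclideanSpace_fin]
  have : Real.pi / (1 / (4 * t)) = 4 * Real.pi * t := by field_simp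
  rw [this, ← Real.rpow_add (by positivity)]
  have h0 : (-(d:ℝ)/2 + (d:ℝ)/2) = 0 := by ring
  rw [h0, Real.rpow_zero]

lemma hk_lintegral (d : ℕ) {t : ℝ} (ht : 0 < t) :
    ∫⁻ z : Rd d, (‖hk d t z‖₊ : ℝ≥0∞) = 1 := by
  have h1 : ∀ z : Rd d, (‖hk d t z‖₊ : ℝ≥0∞) = ENNReal.ofReal (hk d t z) := fun z =>
    Real.enorm_eq_ofReal (hk_nonneg d ht z)
  simp_rw [h1]
  rw [← ofReal_integral_eq_lintegral_ofReal (hk_integrable d ht)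
    (Filter.Eventually.of_forall (hk_nonneg d ht)), hk_integral d ht]
  simp


variable {α β : Type*} [MeasurableSpace α] [MeasurableSpace β]

lemma rpow_two' (c : ℝ≥0∞) : c ^ (2:ℝ) = c * c := by
  rw [show (2:ℝ) = ((2:ℕ):ℝ) by norm_num, ENNReal.rpow_natCast, sq]

/-- Minkowski's integral inequality for `p = 2`, lintegral form. -/
theorem minkowski_lintegral_two (μ : Measure α) (ν : Measure β) [SFinite μ] [SFinite ν]
    {G : α → β → ℝ≥0∞} (hG : Measurable (Function.uncurry G)) :
    (∫⁻ x, (∫⁻ y, G x y ∂ν) ^ (2:ℝ) ∂μ) ^ (1/2:ℝ)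
      ≤ ∫⁻ y, (∫⁻ x, G x y ^ (2:ℝ) ∂μ) ^ (1/2:ℝ) ∂ν := by
  set A : β → ℝ≥0∞ := fun y => (∫⁻ x, G x y ^ (2:ℝ) ∂μ) ^ (1/2:ℝ) with hA
  have hsec : ∀ x, Measurable (G x) := fun x =>
    hG.comp (measurable_prodMk_left)
  have hsec2 : ∀ y, Measurable (fun x => G x y) := fun y =>
    hG.comp (measurable_prodMk_right)
  have hAmeas : Measurable A := by
    apply Measurable.pow_const
    exact Measurable.lintegral_prod_left (by fun_prop)
  have hconj : (2:ℝ).HolderConjugate 2 := by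
    rw [Real.holderConjugate_iff_eq_conjExponent (by norm_num)]; norm_num
  have key : ∫⁻ x, (∫⁻ y, G x y ∂ν) ^ (2:ℝ) ∂μ ≤ (∫⁻ y, A y ∂ν) ^ (2:ℝ) := by
    have step1 : ∀ x, (∫⁻ y, G x y ∂ν) ^ (2:ℝ)
        = ∫⁻ w : β × β, G x w.1 * G x w.2 ∂(ν.prod ν) := by
      intro x
      rw [rpow_two']
      rw [lintegral_prod _ (by fun_prop)]
      rw [← lintegral_mul_const _ (hsec x)]
      refine lintegral_congr fun y => ?_
      rw [← lintegral_const_mul _ (hsec x)]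
    simp_rw [step1]
    rw [lintegral_lintegral_swap (by fun_prop)]
    have step2 : ∀ w : β × β, ∫⁻ x, G x w.1 * G x w.2 ∂μ ≤ A w.1 * A w.2 := by
      intro w
      have := ENNReal.lintegral_mul_le_Lp_mul_Lq μ hconj
        (hsec2 w.1).aemeasurable (hsec2 w.2).aemeasurable
      simpa [hA, one_div] using this
    calc ∫⁻ w : β × β, (∫⁻ x, G x w.1 * G x w.2 ∂μ) ∂(ν.prod ν)
        ≤ ∫⁻ w : β × β, A w.1 * A w.2 ∂(ν.prod ν) := lintegral_mono step2
      _ = (∫⁻ y, A y ∂ν) ^ (2:ℝ) := by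
          rw [lintegral_prod _ (by fun_prop)]
          rw [rpow_two']
          rw [← lintegral_mul_const _ hAmeas]
          exact lintegral_congr fun y => by
            rw [← lintegral_const_mul _ hAmeas]
    done
  calc (∫⁻ x, (∫⁻ y, G x y ∂ν) ^ (2:ℝ) ∂μ) ^ (1/2:ℝ)
      ≤ ((∫⁻ y, A y ∂ν) ^ (2:ℝ)) ^ (1/2:ℝ) :=
        ENNReal.rpow_le_rpow key (by norm_num)
    _ = ∫⁻ y, A y ∂ν := by
        rw [← ENNReal.rpow_mul]
        norm_num

/-- Minkowski's integral inequality for the `L²` seminorm. -/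
theorem eLpNorm_integral_le (μ : Measure α) (ν : Measure β) [SFinite μ] [SFinite ν]
    {F : α → β → ℝ} (hF : Measurable (fun p : α × β => F p.1 p.2)) :
    eLpNorm (fun x => ∫ y, F x y ∂ν) 2 μ ≤ ∫⁻ y, eLpNorm (fun x => F x y) 2 μ ∂ν := by
  have h2 : ((2:ℝ≥0∞)).toReal = (2:ℝ) := by simp
  rw [eLpNorm_eq_lintegral_rpow_enorm_toReal (by norm_num) (by norm_num)]
  simp_rw [eLpNorm_eq_lintegral_rpow_enorm_toReal (p := (2:ℝ≥0∞)) (μ := μ) (by norm_num) (by norm_num), h2]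
  have hbound : ∀ x, (‖∫ y, F x y ∂ν‖₊ : ℝ≥0∞) ≤ ∫⁻ y, (‖F x y‖₊ : ℝ≥0∞) ∂ν := fun x =>
    enorm_integral_le_lintegral_enorm _
  calc (∫⁻ x, (‖∫ y, F x y ∂ν‖₊ : ℝ≥0∞) ^ (2:ℝ) ∂μ) ^ (1/2:ℝ)
      ≤ (∫⁻ x, (∫⁻ y, (‖F x y‖₊ : ℝ≥0∞) ∂ν) ^ (2:ℝ) ∂μ) ^ (1/2:ℝ) := by
        apply ENNReal.rpow_le_rpow _ (by norm_num)
        exact lintegral_mono fun x => ENNReal.rpow_le_rpow (hbound x) (by norm_num)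
    _ ≤ ∫⁻ y, (∫⁻ x, (‖F x y‖₊ : ℝ≥0∞) ^ (2:ℝ) ∂μ) ^ (1/2:ℝ) ∂ν :=
        minkowski_lintegral_two μ ν (G := fun x y => (‖F x y‖₊ : ℝ≥0∞)) (by fun_prop)


lemma heatConv_eq (d : ℕ) {t : ℝ} (ht : 0 < t) (φ : Rd d → ℝ) (x : Rd d) :
    heatConv d t φ x = ∫ y : Rd d, hk d t (x - y) * φ y := by
  rw [heatConv, if_neg ht.ne']
  rfl

/-- The heat semigroup is an `L²` contraction. -/
theorem eLpNorm_heatConv_le (d : ℕ) {t : ℝ} (ht : 0 ≤ t) {φ : Rd d → ℝ}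
    (hφ : Measurable φ) :
    eLpNorm (heatConv d t φ) 2 volume ≤ eLpNorm φ 2 volume := by
  rcases eq_or_lt_of_le ht with h0 | ht
  · rw [heatConv, if_pos h0.symm]
  have hrw : ∀ x : Rd d, heatConv d t φ x = ∫ z : Rd d, hk d t z * φ (x - z) := by
    intro x
    rw [heatConv_eq d ht]
    rw [← MeasureTheory.integral_sub_left_eq_self
      (fun z : Rd d => hk d t z * φ (x - z)) volume x]
    simp [sub_sub_cancel]
  calc eLpNorm (heatConv d t φ) 2 volume
      = eLpNorm (fun x => ∫ z : Rd d, hk d t z * φ (x - z)) 2 volume := by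
        refine eLpNorm_congr_ae (Filter.Eventually.of_forall hrw)
    _ ≤ ∫⁻ z : Rd d, eLpNorm (fun x => hk d t z * φ (x - z)) 2 volume := by
        refine eLpNorm_integral_le volume volume ?_
        exact ((hk_meas d t).comp measurable_snd).mul
          (hφ.comp (measurable_fst.sub measurable_snd))
    _ = ∫⁻ z : Rd d, (‖hk d t z‖₊ : ℝ≥0∞) * eLpNorm φ 2 volume := by
        refine lintegral_congr fun z => ?_
        have h1 : (fun x : Rd d => hk d t z * φ (x - z))
            = (hk d t z) • (fun x : Rd d => φ (x - z)) := rfl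
        rw [h1, eLpNorm_const_smul]
        congr 1
        exact eLpNorm_comp_measurePreserving hφ.aestronglyMeasurable
          (measurePreserving_sub_right volume z)
    _ = eLpNorm φ 2 volume := by
        rw [lintegral_mul_const _ (hk_meas d t).nnnorm.coe_nnreal_ennreal, hk_lintegral d ht, one_mul]


def grid (b : ℝ) (n : ℕ) (τ : ℝ) : ℝ := max 0 (min b ((⌊τ * 2^n⌋ : ℝ) / 2^n))

lemma grid_mem {b : ℝ} (hb : 0 ≤ b) (n : ℕ) (τ : ℝ) : grid b n τ ∈ Icc 0 b := by
  unfold grid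
  constructor
  · exact le_max_left _ _
  · rw [max_le_iff]
    exact ⟨hb, min_le_left _ _⟩

lemma grid_measurable (b : ℝ) (n : ℕ) : Measurable (grid b n) := by
  apply measurable_const.max
  apply measurable_const.min
  have h1 : Measurable fun τ : ℝ => ((⌊τ * 2 ^ n⌋ : ℤ) : ℝ) :=
    measurable_from_top.comp (measurable_id.mul_const _).floor
  exact h1.div_const _

lemma grid_countable_range (b : ℝ) (n : ℕ) : (Set.range (grid b n)).Countable := by
  have : Set.range (grid b n) ⊆ Set.range (fun k : ℤ => max 0 (min b ((k:ℝ) / 2^n))) := by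
    rintro - ⟨τ, rfl⟩
    exact ⟨⌊τ * 2^n⌋, rfl⟩
  exact (Set.countable_range _).mono this

lemma grid_tendsto {b : ℝ} (hb : 0 ≤ b) {τ : ℝ} (hτ : τ ∈ Icc 0 b) :
    Tendsto (fun n => grid b n τ) atTop (nhdsWithin τ (Icc 0 b)) := by
  obtain ⟨h0, h1⟩ := hτ
  have hval : ∀ n, grid b n τ = (⌊τ * 2^n⌋ : ℝ) / 2^n := by
    intro n
    have hpow : (0:ℝ) < 2^n := by positivity
    have hfl : (0:ℝ) ≤ (⌊τ * 2^n⌋ : ℝ) := by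
      have : (0:ℝ) ≤ τ * 2^n := by positivity
      exact_mod_cast Int.floor_nonneg.2 this
    have hle : (⌊τ * 2^n⌋ : ℝ) / 2^n ≤ τ := by
      rw [div_le_iff₀ hpow]
      exact Int.floor_le _
    unfold grid
    rw [min_eq_right (hle.trans h1), max_eq_right (div_nonneg hfl hpow.le)]
  have hmem : ∀ n, grid b n τ ∈ Icc 0 b := fun n => grid_mem hb n τ
  have hlow : ∀ n, τ - (1/2:ℝ)^n ≤ grid b n τ := by
    intro n
    have hpow : (0:ℝ) < 2^n := by positivity
    have key : (τ - (1/2:ℝ)^n) * 2^n ≤ (⌊τ * 2^n⌋ : ℝ) := by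
      have h12 : ((1/2:ℝ)^n) * 2^n = 1 := by rw [← mul_pow]; norm_num
      nlinarith [Int.sub_one_lt_floor (τ * 2^n)]
    rw [hval n, le_div_iff₀ hpow]
    exact key
  have hup : ∀ n, grid b n τ ≤ τ := by
    intro n
    have hpow : (0:ℝ) < 2^n := by positivity
    rw [hval n, div_le_iff₀ hpow]
    exact Int.floor_le _
  have htends : Tendsto (fun n => grid b n τ) atTop (nhds τ) := by
    have hl : Tendsto (fun n : ℕ => τ - (1/2:ℝ)^n) atTop (nhds τ) := by
      have := tendsto_pow_atTop_nhds_zero_of_lt_one (by norm_num : (0:ℝ) ≤ 1/2)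
        (by norm_num : (1/2:ℝ) < 1)
      simpa using tendsto_const_nhds.sub this
    exact tendsto_of_tendsto_of_tendsto_of_le_of_le hl tendsto_const_nhds hlow hup
  exact tendsto_nhdsWithin_of_tendsto_nhds_of_eventually_within _ htends
    (Eventually.of_forall hmem)

/-- A curve which is measurable in space for each time and `L^∞`-continuous in time
admits a jointly measurable modification. -/
theorem exists_jointly_measurable (d : ℕ) {b : ℝ} (hb : 0 ≤ b) (f : Rd d → ℝ → ℝ)
    (hmeas : ∀ t ∈ Icc (0:ℝ) b, Measurable fun x => f x t)
    (hcont : ContinuousIntoLp d ⊤ (Icc 0 b) f) :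
    ∃ F : Rd d × ℝ → ℝ, Measurable F ∧
      ∀ t ∈ Icc (0:ℝ) b, (fun x => F (x, t)) =ᵐ[(volume : Measure (Rd d))] fun x => f x t := by
  classical
  set g : ℕ → Rd d × ℝ → ℝ := fun n p => f p.1 (grid b n p.2) with hgdef
  have hg : ∀ n, Measurable (g n) := by
    intro n
    have hScount : (Set.range (grid b n)).Countable := grid_countable_range b n
    haveI := hScount.to_subtype
    have hmain : Measurable (fun q : Rd d × (Set.range (grid b n)) => f q.1 q.2) := by
      apply measurable_from_prod_countable_left
      rintro ⟨v, τ, rfl⟩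
      exact hmeas _ (grid_mem hb n τ)
    have : g n = (fun q : Rd d × (Set.range (grid b n)) => f q.1 q.2) ∘
        (fun p : Rd d × ℝ => (p.1, ⟨grid b n p.2, Set.mem_range_self _⟩)) := rfl
    rw [this]
    exact hmain.comp (measurable_fst.prodMk
      (((grid_measurable b n).comp measurable_snd).subtype_mk))
  set C : Set (Rd d × ℝ) := {p | ∃ L, Tendsto (fun n => g n p) atTop (nhds L)} with hCdef
  have hC : MeasurableSet C := measurableSet_exists_tendsto hg
  set g' : ℕ → Rd d × ℝ → ℝ := fun n => C.indicator (g n) with hg'def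
  have hg' : ∀ n, Measurable (g' n) := fun n => (hg n).indicator hC
  have hconv : ∀ p, ∃ L, Tendsto (fun n => g' n p) atTop (nhds L) := by
    intro p
    by_cases hp : p ∈ C
    · obtain ⟨L, hL⟩ := id hp
      refine ⟨L, ?_⟩
      have : (fun n => g' n p) = fun n => g n p := by
        funext n; exact Set.indicator_of_mem hp _
      rw [this]; exact hL
    · refine ⟨0, ?_⟩
      have : (fun n => g' n p) = fun _ => 0 := by
        funext n; exact Set.indicator_of_notMem hp _
      rw [this]; exact tendsto_const_nhds
  set F : Rd d × ℝ → ℝ := fun p => limUnder atTop (fun n => g' n p) with hFdef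
  have hFtend : ∀ p, Tendsto (fun n => g' n p) atTop (nhds (F p)) := fun p =>
    tendsto_nhds_limUnder (hconv p)
  have hF : Measurable F :=
    measurable_of_tendsto_metrizable hg' (tendsto_pi_nhds.2 hFtend)
  refine ⟨F, hF, ?_⟩
  intro t ht
  have hgt : Tendsto (fun n => grid b n t) atTop (nhdsWithin t (Icc 0 b)) :=
    grid_tendsto hb ht
  have h0 : Tendsto (fun n => eLpNorm (fun x => f x (grid b n t) - f x t) ⊤ volume)
      atTop (nhds 0) := (hcont t ht).comp hgt
  have hae : ∀ᵐ x ∂(volume : Measure (Rd d)), ∀ n,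
      (‖f x (grid b n t) - f x t‖₊ : ℝ≥0∞)
        ≤ eLpNorm (fun x => f x (grid b n t) - f x t) ⊤ volume := by
    rw [ae_all_iff]
    intro n
    rw [eLpNorm_exponent_top]
    exact ae_le_eLpNormEssSup
  filter_upwards [hae] with x hx
  have htend : Tendsto (fun n => f x (grid b n t)) atTop (nhds (f x t)) := by
    have h1 : Tendsto (fun n => (‖f x (grid b n t) - f x t‖₊ : ℝ≥0∞)) atTop (nhds 0) := by
      exact tendsto_of_tendsto_of_tendsto_of_le_of_le tendsto_const_nhds h0
        (fun n => zero_le) hx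
    have h2 : Tendsto (fun n => ‖f x (grid b n t) - f x t‖) atTop (nhds 0) := by
      have := (ENNReal.tendsto_toReal (by norm_num : (0:ℝ≥0∞) ≠ ⊤)).comp h1
      simpa [Function.comp_def] using this
    rw [tendsto_iff_norm_sub_tendsto_zero]
    exact h2
  have hmem : (x, t) ∈ C := ⟨f x t, htend⟩
  have heq : ∀ n, g' n (x, t) = f x (grid b n t) := fun n => Set.indicator_of_mem hmem _
  have h3 : Tendsto (fun n => g' n (x, t)) atTop (nhds (f x t)) := by
    simp_rw [heq]; exact htend
  exact tendsto_nhds_unique (hFtend (x, t)) h3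


end WF

end AuxWF

noncomputable section ExtraWF

namespace WF

lemma rrate_nonneg (s : ℝ) : 0 ≤ rrate s := by
  unfold rrate
  split_ifs
  · exact (Real.exp_pos _).le
  · exact le_refl 0

lemma rrate_le_abs (s : ℝ) : rrate s ≤ |s| := by
  unfold rrate
  split_ifs with h
  · rw [abs_of_pos h, neg_div, Real.exp_neg]
    rw [inv_le_comm₀ (Real.exp_pos _) h]
    calc s⁻¹ ≤ 1/s + 1 := by rw [one_div]; linarith
      _ ≤ Real.exp (1/s) := by simpa using Real.add_one_le_exp (1/s)
  · exact abs_nonneg s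

lemma rrate_measurable : Measurable rrate := by
  unfold rrate
  exact Measurable.ite (measurableSet_lt measurable_const measurable_id)
    ((measurable_const.div measurable_id).exp) measurable_const

lemma heatConv_measurable (d : ℕ) (t : ℝ) {φ : Rd d → ℝ} (hφ : Measurable φ) :
    Measurable (heatConv d t φ) := by
  unfold heatConv
  split_ifs with h
  · exact hφ
  · have hint : StronglyMeasurable fun p : Rd d × Rd d =>
        (4 * Real.pi * t) ^ (-(d : ℝ) / 2) * Real.exp (-‖p.1 - p.2‖ ^ 2 / (4 * t)) * φ p.2 := by
      apply Measurable.stronglyMeasurable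
      exact (measurable_const.mul
        (((( measurable_fst.sub measurable_snd).norm.pow measurable_const).neg.div_const _).exp)).mul
        (hφ.comp measurable_snd)
    exact hint.integral_prod_right'.measurable

/-- globally measurable version of the heat kernel in both variables -/
def hkJ (d : ℕ) (s : ℝ) (z : Rd d) : ℝ :=
  if 0 < s then
    Real.exp (Real.log (4 * Real.pi * s) * (-(d : ℝ) / 2)) * Real.exp (-‖z‖ ^ 2 / (4 * s))
  else 0

lemma hkJ_eq (d : ℕ) {s : ℝ} (hs : 0 < s) (z : Rd d) : hkJ d s z = hk d s z := by
  unfold hkJ hk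
  rw [if_pos hs, Real.rpow_def_of_pos (by positivity)]

lemma hkJ_measurable (d : ℕ) : Measurable (fun q : ℝ × Rd d => hkJ d q.1 q.2) := by
  unfold hkJ
  apply Measurable.ite
  · exact measurableSet_lt measurable_const measurable_fst
  · apply Measurable.mul
    · exact ((measurable_const.mul measurable_fst).log.mul measurable_const).exp
    · exact ((measurable_snd.norm.pow measurable_const).neg.div
        (measurable_const.mul measurable_fst)).exp
  · exact measurable_const

end WF

end ExtraWF

noncomputable section MainWF

namespace WF

variable {d : ℕ} {lam beta tstar : ℝ} {T0 Y0 : Rd d → ℝ} {T Y : Rd d → ℝ → ℝ}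

/-- the nonlinearity is bounded in `L²` by `‖Y₀‖_∞ ‖T‖_2`. -/
theorem mul_bound (hbeta : 0 ≤ beta) (hY0 : ∀ x, 0 ≤ Y0 x)
    (sol : IsMildSolutionOn d lam beta (Icc 0 tstar) T0 Y0 T Y)
    {τ : ℝ} (hτ : τ ∈ Icc (0:ℝ) tstar) :
    eLpNorm (fun y => Y y τ * rrate (T y τ)) 2 volume
      ≤ ENNReal.ofReal ((eLpNorm Y0 ⊤ volume).toReal)
          * eLpNorm (fun y => T y τ) 2 volume := by
  set M := (eLpNorm Y0 ⊤ volume).toReal with hM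
  have hMnn : 0 ≤ M := ENNReal.toReal_nonneg
  have haeY0 : ∀ᵐ y ∂(volume : Measure (Rd d)), |Y0 y| ≤ M := by
    have h := ae_le_eLpNormEssSup (f := Y0) (μ := (volume : Measure (Rd d)))
    filter_upwards [h] with y hy
    have h1 : (‖Y0 y‖₊ : ℝ≥0∞) ≤ eLpNorm Y0 ⊤ volume := by
      rw [eLpNorm_exponent_top]; exact hy
    have h2 := ENNReal.toReal_mono sol.bdd_Y0.ne h1
    rw [ENNReal.coe_toReal, coe_nnnorm, Real.norm_eq_abs] at h2
    exact h2
  have hbound : ∀ᵐ y ∂(volume : Measure (Rd d)),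
      ‖Y y τ * rrate (T y τ)‖ ≤ ‖M * T y τ‖ := by
    filter_upwards [haeY0] with y hy
    have hexp : Real.exp (-beta * ∫ σ in Set.Ioc (0:ℝ) τ, rrate (T y σ)) ≤ 1 := by
      rw [Real.exp_le_one_iff]
      apply mul_nonpos_of_nonpos_of_nonneg (neg_nonpos.2 hbeta)
      exact setIntegral_nonneg measurableSet_Ioc fun σ _ => rrate_nonneg _
    have hY1 : 0 ≤ Y y τ := by
      rw [sol.fuel y τ hτ]
      exact mul_nonneg (hY0 y) (Real.exp_pos _).le
    have hY2 : Y y τ ≤ M := by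
      rw [sol.fuel y τ hτ]
      calc Y0 y * Real.exp (-beta * ∫ σ in Set.Ioc (0:ℝ) τ, rrate (T y σ))
          ≤ Y0 y * 1 := mul_le_mul_of_nonneg_left hexp (hY0 y)
        _ = Y0 y := mul_one _
        _ ≤ M := (le_abs_self _).trans hy
    rw [Real.norm_eq_abs, Real.norm_eq_abs, abs_mul, abs_mul]
    apply mul_le_mul
    · rw [abs_of_nonneg hY1, abs_of_nonneg hMnn]; exact hY2
    · rw [abs_of_nonneg (rrate_nonneg _)]; exact rrate_le_abs _
    · exact abs_nonneg _
    · exact abs_nonneg _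
  calc eLpNorm (fun y => Y y τ * rrate (T y τ)) 2 volume
      ≤ eLpNorm (fun y => M * T y τ) 2 volume := eLpNorm_mono_ae hbound
    _ = (‖M‖₊ : ℝ≥0∞) * eLpNorm (fun y => T y τ) 2 volume := by
        have h : (fun y => M * T y τ) = M • (fun y => T y τ) := rfl
        rw [h, eLpNorm_const_smul]; rfl
    _ = ENNReal.ofReal M * eLpNorm (fun y => T y τ) 2 volume := by
        exact congrArg (· * eLpNorm (fun y => T y τ) 2 volume) (Real.enorm_eq_ofReal hMnn)

/-- Key a priori estimate coming from the Duhamel formula. -/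
theorem key_estimate (hbeta : 0 ≤ beta) (hY0 : ∀ x, 0 ≤ Y0 x)
    (sol : IsMildSolutionOn d lam beta (Icc 0 tstar) T0 Y0 T Y)
    {t : ℝ} (ht : t ∈ Icc (0:ℝ) tstar) :
    eLpNorm (fun x => T x t) 2 volume
      ≤ ENNReal.ofReal (Real.exp (-lam * t)) * eLpNorm T0 2 volume
        + ∫⁻ τ in Ioo (0:ℝ) t, ENNReal.ofReal (Real.exp (-lam * (t - τ)))
            * (ENNReal.ofReal ((eLpNorm Y0 ⊤ volume).toReal)
               * eLpNorm (fun x => T x τ) 2 volume) := by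
  have htstar : (0:ℝ) ≤ tstar := le_trans ht.1 ht.2
  obtain ⟨T', hT'meas, hT'eq⟩ := exists_jointly_measurable d htstar T sol.meas_T sol.cont_T
  obtain ⟨Y', hY'meas, hY'eq⟩ := exists_jointly_measurable d htstar Y sol.meas_Y sol.cont_Y
  set G2 : Rd d × ℝ → ℝ := fun p => Real.exp (-lam * (t - p.2)) *
      ∫ y : Rd d, hkJ d (t - p.2) (p.1 - y) * (Y' (y, p.2) * rrate (T' (y, p.2))) with hG2def
  have hG2meas : Measurable G2 := by
    apply Measurable.mul
    · exact ((measurable_const.sub measurable_snd).const_mul (-lam)).exp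
    · have hker : Measurable fun q : (Rd d × ℝ) × Rd d =>
          hkJ d (t - q.1.2) (q.1.1 - q.2) * (Y' (q.2, q.1.2) * rrate (T' (q.2, q.1.2))) := by
        apply Measurable.mul
        · exact (hkJ_measurable d).comp
            ((measurable_const.sub measurable_fst.snd).prodMk
              (measurable_fst.fst.sub measurable_snd))
        · exact (hY'meas.comp (measurable_snd.prodMk measurable_fst.snd)).mul
            (rrate_measurable.comp (hT'meas.comp (measurable_snd.prodMk measurable_fst.snd)))
      exact hker.stronglyMeasurable.integral_prod_right'.measurable
  set fτ : ℝ → Rd d → ℝ := fun τ y => Y y τ * rrate (T y τ) with hfτ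
  have hIccsub : ∀ {τ : ℝ}, τ ∈ Ioo (0:ℝ) t → τ ∈ Icc (0:ℝ) tstar := fun {τ} hτ =>
    ⟨hτ.1.le, hτ.2.le.trans ht.2⟩
  have heq : ∀ (x : Rd d) {τ : ℝ}, τ ∈ Ioo (0:ℝ) t →
      Real.exp (-lam * (t - τ)) * heatConv d (t - τ) (fτ τ) x = G2 (x, τ) := by
    intro x τ hτ
    have hsτ : 0 < t - τ := sub_pos.2 hτ.2
    rw [hG2def]
    congr 1
    rw [heatConv_eq d hsτ]
    apply integral_congr_ae
    filter_upwards [hT'eq τ (hIccsub hτ), hY'eq τ (hIccsub hτ)] with y hy1 hy2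
    rw [hkJ_eq d hsτ, hy1, hy2]
  set h1 : Rd d → ℝ := fun x => Real.exp (-lam * t) * heatConv d t T0 x with hh1
  set h2 : Rd d → ℝ := fun x => ∫ τ in Set.Ioc (0:ℝ) t,
      Real.exp (-lam * (t - τ)) * heatConv d (t - τ) (fun y => Y y τ * rrate (T y τ)) x
    with hh2
  have h2eq : ∀ x, h2 x = ∫ τ in Ioo (0:ℝ) t, G2 (x, τ) := by
    intro x
    show (∫ τ in Set.Ioc (0:ℝ) t,
        Real.exp (-lam * (t - τ)) * heatConv d (t - τ) (fun y => Y y τ * rrate (T y τ)) x) = _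
    rw [integral_Ioc_eq_integral_Ioo]
    exact setIntegral_congr_fun measurableSet_Ioo fun τ hτ => heq x hτ
  have hm1 : AEStronglyMeasurable h1 volume :=
    ((heatConv_measurable d t sol.meas_T0).const_mul _).aestronglyMeasurable
  have hm2 : AEStronglyMeasurable h2 volume := by
    have h : h2 = fun x => ∫ τ in Ioo (0:ℝ) t, G2 (x, τ) := funext h2eq
    rw [h]
    exact (hG2meas.stronglyMeasurable.integral_prod_right').aestronglyMeasurable
  have hduh : (fun x => T x t) =ᵐ[volume] (h1 + h2) := by
    refine (sol.duhamel t ht).trans (Eventually.of_forall fun x => ?_)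
    rfl
  have term1 : eLpNorm h1 2 volume
      ≤ ENNReal.ofReal (Real.exp (-lam * t)) * eLpNorm T0 2 volume := by
    have h : h1 = (Real.exp (-lam * t)) • (heatConv d t T0) := rfl
    rw [h, eLpNorm_const_smul, Real.enorm_eq_ofReal (Real.exp_nonneg _)]
    exact mul_le_mul_right (eLpNorm_heatConv_le d ht.1 sol.meas_T0) _
  have term2 : eLpNorm h2 2 volume
      ≤ ∫⁻ τ in Ioo (0:ℝ) t, ENNReal.ofReal (Real.exp (-lam * (t - τ)))
          * (ENNReal.ofReal ((eLpNorm Y0 ⊤ volume).toReal)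
             * eLpNorm (fun x => T x τ) 2 volume) := by
    calc eLpNorm h2 2 volume
        = eLpNorm (fun x => ∫ τ in Ioo (0:ℝ) t, G2 (x, τ)) 2 volume :=
          eLpNorm_congr_ae (Eventually.of_forall h2eq)
      _ ≤ ∫⁻ τ in Ioo (0:ℝ) t, eLpNorm (fun x => G2 (x, τ)) 2 volume :=
          eLpNorm_integral_le volume (volume.restrict (Ioo (0:ℝ) t))
            (F := fun x τ => G2 (x, τ)) (by exact hG2meas)
      _ ≤ ∫⁻ τ in Ioo (0:ℝ) t, ENNReal.ofReal (Real.exp (-lam * (t - τ)))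
            * (ENNReal.ofReal ((eLpNorm Y0 ⊤ volume).toReal)
               * eLpNorm (fun x => T x τ) 2 volume) := by
          apply lintegral_mono_ae
          rw [ae_restrict_iff' measurableSet_Ioo]
          apply Eventually.of_forall
          intro τ hτ
          have hτI := hIccsub hτ
          have hfmeas : Measurable (fτ τ) :=
            (sol.meas_Y τ hτI).mul (rrate_measurable.comp (sol.meas_T τ hτI))
          calc eLpNorm (fun x => G2 (x, τ)) 2 volume
              = eLpNorm (fun x =>
                  Real.exp (-lam * (t - τ)) * heatConv d (t - τ) (fτ τ) x) 2 volume :=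
                eLpNorm_congr_ae (Eventually.of_forall fun x => (heq x hτ).symm)
            _ = ENNReal.ofReal (Real.exp (-lam * (t - τ)))
                  * eLpNorm (heatConv d (t - τ) (fτ τ)) 2 volume := by
                have h : (fun x => Real.exp (-lam * (t - τ)) * heatConv d (t - τ) (fτ τ) x)
                    = (Real.exp (-lam * (t - τ))) • heatConv d (t - τ) (fτ τ) := rfl
                rw [h, eLpNorm_const_smul, Real.enorm_eq_ofReal (Real.exp_nonneg _)]
            _ ≤ ENNReal.ofReal (Real.exp (-lam * (t - τ)))
                  * (ENNReal.ofReal ((eLpNorm Y0 ⊤ volume).toReal)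
                     * eLpNorm (fun x => T x τ) 2 volume) := by
                apply mul_le_mul_right
                exact le_trans (eLpNorm_heatConv_le d (sub_pos.2 hτ.2).le hfmeas)
                  (mul_bound hbeta hY0 sol hτI)
  calc eLpNorm (fun x => T x t) 2 volume
      = eLpNorm (h1 + h2) 2 volume := eLpNorm_congr_ae hduh
    _ ≤ eLpNorm h1 2 volume + eLpNorm h2 2 volume := eLpNorm_add_le hm1 hm2 one_le_two
    _ ≤ _ := add_le_add term1 term2

end WF

end MainWF

noncomputable section MainWF2

namespace WF

variable {d : ℕ} {tstar : ℝ} {T : Rd d → ℝ → ℝ}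

theorem u_continuousOn
    (hmeas : ∀ t ∈ Icc (0:ℝ) tstar, Measurable fun x => T x t)
    (hT2 : ∀ t ∈ Icc (0:ℝ) tstar, MemLp (fun x => T x t) 2 volume)
    (hcont2 : ContinuousIntoLp d 2 (Icc 0 tstar) T) :
    ContinuousOn (fun τ => (eLpNorm (fun x => T x τ) 2 volume).toReal) (Icc 0 tstar) := by
  intro t₀ ht₀
  set u : ℝ → ℝ := fun τ => (eLpNorm (fun x => T x τ) 2 volume).toReal with hu
  have hρ : Tendsto (fun t => (eLpNorm (fun x => T x t - T x t₀) 2 volume).toReal)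
      (nhdsWithin t₀ (Icc 0 tstar)) (nhds 0) := by
    have h := (ENNReal.tendsto_toReal (a := 0) (by simp)).comp (hcont2 t₀ ht₀)
    simpa [Function.comp_def] using h
  have hbd : ∀ t ∈ Icc (0:ℝ) tstar,
      dist (u t) (u t₀) ≤ (eLpNorm (fun x => T x t - T x t₀) 2 volume).toReal := by
    intro t ht
    set D := eLpNorm (fun x => T x t - T x t₀) 2 volume with hD
    have hDfin : D ≠ ⊤ := ((hT2 t ht).sub (hT2 t₀ ht₀)).2.ne
    have hfin : ∀ s ∈ Icc (0:ℝ) tstar, eLpNorm (fun x => T x s) 2 volume ≠ ⊤ :=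
      fun s hs => (hT2 s hs).2.ne
    have h1 : eLpNorm (fun x => T x t) 2 volume
        ≤ D + eLpNorm (fun x => T x t₀) 2 volume := by
      have hsplit : (fun x => T x t)
          = (fun x => T x t - T x t₀) + (fun x => T x t₀) := by
        funext x; simp
      rw [hsplit]
      exact eLpNorm_add_le ((hmeas t ht).sub (hmeas t₀ ht₀)).aestronglyMeasurable
        (hmeas t₀ ht₀).aestronglyMeasurable one_le_two
    have h2 : eLpNorm (fun x => T x t₀) 2 volume
        ≤ D + eLpNorm (fun x => T x t) 2 volume := by
      have hsplit : (fun x => T x t₀)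
          = (fun x => T x t₀ - T x t) + (fun x => T x t) := by
        funext x; simp
      have hcomm : eLpNorm (fun x => T x t₀ - T x t) 2 volume = D := by
        rw [hD]
        have : (fun x => T x t₀ - T x t) = (fun x => T x t₀) - (fun x => T x t) := rfl
        have h2 : (fun x => T x t - T x t₀) = (fun x => T x t) - (fun x => T x t₀) := rfl
        rw [this, h2, eLpNorm_sub_comm]
      rw [hsplit]
      calc eLpNorm ((fun x => T x t₀ - T x t) + fun x => T x t) 2 volume
          ≤ eLpNorm (fun x => T x t₀ - T x t) 2 volume
            + eLpNorm (fun x => T x t) 2 volume :=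
            eLpNorm_add_le ((hmeas t₀ ht₀).sub (hmeas t ht)).aestronglyMeasurable
              (hmeas t ht).aestronglyMeasurable one_le_two
        _ = D + eLpNorm (fun x => T x t) 2 volume := by rw [hcomm]
    have hr1 : u t ≤ D.toReal + u t₀ := by
      have := ENNReal.toReal_mono (by simp [hDfin, hfin t₀ ht₀]) h1
      rwa [ENNReal.toReal_add hDfin (hfin t₀ ht₀)] at this
    have hr2 : u t₀ ≤ D.toReal + u t := by
      have := ENNReal.toReal_mono (by simp [hDfin, hfin t ht]) h2
      rwa [ENNReal.toReal_add hDfin (hfin t ht)] at this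
    rw [Real.dist_eq, abs_sub_le_iff]
    constructor <;> linarith
  rw [ContinuousWithinAt, tendsto_iff_dist_tendsto_zero]
  apply squeeze_zero'
  · exact Eventually.of_forall fun t => dist_nonneg
  · filter_upwards [self_mem_nhdsWithin] with t ht using hbd t ht
  · exact hρ

theorem gronwall_aux {A M b : ℝ} (hA : 0 ≤ A) (hM : 0 ≤ M) (hb : 0 ≤ b)
    {v : ℝ → ℝ} (hv : Continuous v) (hvnn : ∀ s, 0 ≤ v s)
    (hineq : ∀ s ∈ Icc (0:ℝ) b, v s ≤ A + ∫ τ in (0:ℝ)..s, M * v τ) :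
    ∀ s ∈ Icc (0:ℝ) b, v s ≤ A * Real.exp (M * s) := by
  set w : ℝ → ℝ := fun τ => M * v τ with hw
  have hwc : Continuous w := continuous_const.mul hv
  set φ : ℝ → ℝ := fun s => A + ∫ τ in (0:ℝ)..s, w τ with hφ
  have hφc : Continuous φ := continuous_const.add
    (intervalIntegral.continuous_primitive (fun a b => hwc.intervalIntegrable a b) 0)
  have hφd : ∀ s, HasDerivAt φ (w s) s := fun s =>
    (intervalIntegral.integral_hasDerivAt_right (hwc.intervalIntegrable _ _)
      (hwc.stronglyMeasurableAtFilter _ _) hwc.continuousAt).const_add A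
  have hφnn : ∀ s ∈ Icc (0:ℝ) b, 0 ≤ φ s := fun s hs =>
    add_nonneg hA (intervalIntegral.integral_nonneg hs.1 fun τ _ => mul_nonneg hM (hvnn τ))
  have hgron := norm_le_gronwallBound_of_norm_deriv_right_le (f := φ) (f' := w)
    (δ := A) (K := M) (ε := 0) (a := 0) (b := b)
    hφc.continuousOn (fun s _ => (hφd s).hasDerivWithinAt)
    (by simp [hφ, abs_of_nonneg hA])
    (by
      intro s hs
      have hsI : s ∈ Icc (0:ℝ) b := ⟨hs.1, hs.2.le⟩
      rw [Real.norm_eq_abs, Real.norm_eq_abs, abs_of_nonneg (hφnn s hsI),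
        abs_of_nonneg (mul_nonneg hM (hvnn s))]
      have : v s ≤ φ s := hineq s hsI
      nlinarith [hvnn s])
  intro s hs
  calc v s ≤ φ s := hineq s hs
    _ ≤ |φ s| := le_abs_self _
    _ ≤ gronwallBound A M 0 (s - 0) := by
        have := hgron s hs
        rwa [Real.norm_eq_abs] at this
    _ = A * Real.exp (M * s) := by rw [sub_zero, gronwallBound_ε0]

end WF

end MainWF2


/-- Grönwall-type estimate: there is an absolute constant `C ≥ 1` such
that for any `λ > 0` and any mild solution with `T₀ ∈ L² ∩ L^∞`, `Y₀ ∈ L^∞`, `Y₀ ≥ 0`,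
and `T(·,t) ∈ L² ∩ L^∞` continuously in time,
`‖T(·,t)‖_{L²}² ≤ C ‖T₀‖_{L²}² exp((C ‖Y₀‖_{L^∞} - λ) t)` for all `t ∈ [0,t*]`. -/
theorem temperature_l2_gronwall_estimate :
    ∃ C : ℝ, 1 ≤ C ∧
      ∀ (d : ℕ), 1 ≤ d → ∀ (lam beta : ℝ), 0 < lam → 0 ≤ beta →
      ∀ (tstar : ℝ), 0 < tstar →
      ∀ (T0 Y0 : Rd d → ℝ) (T Y : Rd d → ℝ → ℝ),
        (∀ x, 0 ≤ Y0 x) →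
        MeasureTheory.MemLp T0 2 volume →
        IsMildSolutionOn d lam beta (Set.Icc 0 tstar) T0 Y0 T Y →
        (∀ t ∈ Set.Icc (0 : ℝ) tstar, MeasureTheory.MemLp (fun x => T x t) 2 volume) →
        ContinuousIntoLp d 2 (Set.Icc 0 tstar) T →
        ∀ t ∈ Set.Icc (0 : ℝ) tstar,
          (eLpNorm (fun x => T x t) 2 volume) ^ 2
            ≤ ENNReal.ofReal C * (eLpNorm T0 2 volume) ^ 2
              * ENNReal.ofReal
                  (Real.exp ((C * (eLpNorm Y0 ⊤ volume).toReal - lam) * t)) := by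
  refine ⟨2, one_le_two, ?_⟩
  intro d _hd lam beta hlam hbeta tstar htstar T0 Y0 T Y hY0 hT0 sol hT2 hcont2
  set M := (eLpNorm Y0 ⊤ volume).toReal with hM
  set A := (eLpNorm T0 2 volume).toReal with hA
  have hMnn : 0 ≤ M := ENNReal.toReal_nonneg
  have hAnn : 0 ≤ A := ENNReal.toReal_nonneg
  have hafin : eLpNorm T0 2 volume ≠ ⊤ := hT0.2.ne
  have hgfin : ∀ τ, τ ∈ Icc (0:ℝ) tstar → eLpNorm (fun x => T x τ) 2 volume ≠ ⊤ :=
    fun τ hτ => (hT2 τ hτ).2.ne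
  set u : ℝ → ℝ := fun τ => (eLpNorm (fun x => T x τ) 2 volume).toReal with hu
  have hunn : ∀ τ, 0 ≤ u τ := fun τ => ENNReal.toReal_nonneg
  have hucont : ContinuousOn u (Icc 0 tstar) := WF.u_continuousOn sol.meas_T hT2 hcont2
  have hreal : ∀ t ∈ Icc (0:ℝ) tstar,
      u t ≤ Real.exp (-lam * t) * A
        + ∫ τ in (0:ℝ)..t, Real.exp (-lam * (t - τ)) * (M * u τ) := by
    intro t ht
    have hkey := WF.key_estimate hbeta hY0 sol ht
    set h : ℝ → ℝ := fun τ => Real.exp (-lam * (t - τ)) * (M * u τ) with hh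
    have hIcc : Icc (0:ℝ) t ⊆ Icc 0 tstar := Icc_subset_Icc le_rfl ht.2
    have hnn' : ∀ τ, 0 ≤ h τ :=
      fun τ => mul_nonneg (Real.exp_nonneg _) (mul_nonneg hMnn (hunn τ))
    have hint : IntegrableOn h (Ioo 0 t) volume := by
      refine (ContinuousOn.integrableOn_compact isCompact_Icc ?_).mono_set
        Ioo_subset_Icc_self
      apply ContinuousOn.mul
      · exact Continuous.continuousOn (by fun_prop)
      · exact continuousOn_const.mul (hucont.mono hIcc)
    have hnn : 0 ≤ᵐ[volume.restrict (Ioo (0:ℝ) t)] h := Eventually.of_forall hnn'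
    have heqi : (∫⁻ τ in Ioo (0:ℝ) t, ENNReal.ofReal (Real.exp (-lam * (t - τ)))
          * (ENNReal.ofReal M * eLpNorm (fun x => T x τ) 2 volume))
        = ENNReal.ofReal (∫ τ in Ioo (0:ℝ) t, h τ) := by
      rw [ofReal_integral_eq_lintegral_ofReal hint hnn]
      apply lintegral_congr_ae
      filter_upwards [ae_restrict_mem measurableSet_Ioo] with τ hτ
      rw [hh]
      rw [ENNReal.ofReal_mul (Real.exp_nonneg _), ENNReal.ofReal_mul hMnn,
        ENNReal.ofReal_toReal (hgfin τ ⟨hτ.1.le, hτ.2.le.trans ht.2⟩)]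
    have hle2 : eLpNorm (fun x => T x t) 2 volume
        ≤ ENNReal.ofReal (Real.exp (-lam * t) * A)
          + ENNReal.ofReal (∫ τ in Ioo (0:ℝ) t, h τ) := by
      refine hkey.trans (le_of_eq ?_)
      rw [← heqi]
      congr 1
      rw [ENNReal.ofReal_mul (Real.exp_nonneg _), ENNReal.ofReal_toReal hafin]
    have hfinR : (ENNReal.ofReal (Real.exp (-lam * t) * A)
        + ENNReal.ofReal (∫ τ in Ioo (0:ℝ) t, h τ)) ≠ ⊤ := by simp
    have hle3 := ENNReal.toReal_mono hfinR hle2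
    rw [ENNReal.toReal_add (by simp) (by simp), ENNReal.toReal_ofReal (by positivity),
      ENNReal.toReal_ofReal (setIntegral_nonneg measurableSet_Ioo fun τ _ => hnn' τ)]
      at hle3
    rw [intervalIntegral.integral_of_le ht.1, integral_Ioc_eq_integral_Ioo]
    exact hle3
  set uc : ℝ → ℝ := fun τ => u (max 0 (min tstar τ)) with hucdef
  have hucEq : ∀ τ ∈ Icc (0:ℝ) tstar, uc τ = u τ := by
    intro τ hτ
    show u (max 0 (min tstar τ)) = u τ
    rw [min_eq_right hτ.2, max_eq_right hτ.1]
  have huccont : Continuous uc := by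
    apply hucont.comp_continuous (continuous_const.max (continuous_const.min continuous_id))
    intro τ
    exact ⟨le_max_left _ _, max_le htstar.le (min_le_left _ _)⟩
  set v : ℝ → ℝ := fun τ => Real.exp (lam * τ) * uc τ with hv
  have hvc : Continuous v :=
    (Real.continuous_exp.comp (continuous_const.mul continuous_id)).mul huccont
  have hvnn : ∀ s, 0 ≤ v s := fun s => mul_nonneg (Real.exp_nonneg _) (hunn _)
  have hvineq : ∀ s ∈ Icc (0:ℝ) tstar, v s ≤ A + ∫ τ in (0:ℝ)..s, M * v τ := by
    intro s hs
    have h1 := hreal s hs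
    have e1 : v s = Real.exp (lam * s) * u s := by
      show Real.exp (lam * s) * uc s = _
      rw [hucEq s hs]
    have step : Real.exp (lam * s) * (Real.exp (-lam * s) * A
        + ∫ τ in (0:ℝ)..s, Real.exp (-lam * (s - τ)) * (M * u τ))
        = A + ∫ τ in (0:ℝ)..s,
            Real.exp (lam * s) * (Real.exp (-lam * (s - τ)) * (M * u τ)) := by
      rw [mul_add, ← mul_assoc, ← Real.exp_add, ← intervalIntegral.integral_const_mul]
      norm_num
    calc v s = Real.exp (lam * s) * u s := e1
      _ ≤ Real.exp (lam * s) * (Real.exp (-lam * s) * A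
            + ∫ τ in (0:ℝ)..s, Real.exp (-lam * (s - τ)) * (M * u τ)) :=
          mul_le_mul_of_nonneg_left h1 (Real.exp_nonneg _)
      _ = A + ∫ τ in (0:ℝ)..s,
            Real.exp (lam * s) * (Real.exp (-lam * (s - τ)) * (M * u τ)) := step
      _ = A + ∫ τ in (0:ℝ)..s, M * v τ := by
          congr 1
          apply intervalIntegral.integral_congr
          intro τ hτ
          rw [uIcc_of_le hs.1] at hτ
          have hτI : τ ∈ Icc (0:ℝ) tstar := ⟨hτ.1, hτ.2.trans hs.2⟩
          show Real.exp (lam * s) * (Real.exp (-lam * (s - τ)) * (M * u τ))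
            = M * (Real.exp (lam * τ) * uc τ)
          rw [hucEq τ hτI, ← mul_assoc, ← Real.exp_add]
          have harg : lam * s + -lam * (s - τ) = lam * τ := by ring
          rw [harg]
          ring
  have hgron := WF.gronwall_aux hAnn hMnn htstar.le hvc hvnn hvineq
  intro t ht
  have hut : u t ≤ A * Real.exp ((M - lam) * t) := by
    have h1 : v t ≤ A * Real.exp (M * t) := hgron t ht
    have e1 : u t = Real.exp (-lam * t) * v t := by
      show u t = Real.exp (-lam * t) * (Real.exp (lam * t) * uc t)
      rw [hucEq t ht, ← mul_assoc, ← Real.exp_add]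
      norm_num
    rw [e1]
    calc Real.exp (-lam * t) * v t
        ≤ Real.exp (-lam * t) * (A * Real.exp (M * t)) :=
          mul_le_mul_of_nonneg_left h1 (Real.exp_nonneg _)
      _ = A * Real.exp ((M - lam) * t) := by
          rw [mul_comm (Real.exp (-lam * t)) _, mul_assoc, ← Real.exp_add]
          congr 2
          ring
  have hsq : u t ^ 2 ≤ 2 * A ^ 2 * Real.exp ((2 * M - lam) * t) := by
    have h2 : u t ^ 2 ≤ (A * Real.exp ((M - lam) * t)) ^ 2 :=
      pow_le_pow_left₀ (hunn t) hut 2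
    have h3 : (A * Real.exp ((M - lam) * t)) ^ 2
        = A ^ 2 * (Real.exp ((2 * M - lam) * t) * Real.exp (-lam * t)) := by
      rw [mul_pow, sq (Real.exp _), ← Real.exp_add, ← Real.exp_add]
      congr 2
      ring
    have h4 : Real.exp (-lam * t) ≤ 1 := by
      rw [Real.exp_le_one_iff]
      have := ht.1
      nlinarith
    have h5 : A ^ 2 * (Real.exp ((2 * M - lam) * t) * Real.exp (-lam * t))
        ≤ A ^ 2 * Real.exp ((2 * M - lam) * t) := by
      have h6 : Real.exp ((2 * M - lam) * t) * Real.exp (-lam * t)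
          ≤ Real.exp ((2 * M - lam) * t) * 1 :=
        mul_le_mul_of_nonneg_left h4 (Real.exp_pos _).le
      rw [mul_one] at h6
      exact mul_le_mul_of_nonneg_left h6 (sq_nonneg A)
    have h7 : u t ^ 2 ≤ A ^ 2 * Real.exp ((2 * M - lam) * t) := by
      rw [h3] at h2
      exact h2.trans h5
    have h8 : 0 ≤ A ^ 2 * Real.exp ((2 * M - lam) * t) :=
      mul_nonneg (sq_nonneg A) (Real.exp_pos _).le
    linarith
  have hgt : eLpNorm (fun x => T x t) 2 volume = ENNReal.ofReal (u t) :=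
    (ENNReal.ofReal_toReal (hgfin t ht)).symm
  calc (eLpNorm (fun x => T x t) 2 volume) ^ 2
      = ENNReal.ofReal (u t) ^ 2 := by rw [hgt]
    _ = ENNReal.ofReal (u t ^ 2) := by rw [← ENNReal.ofReal_pow (hunn t)]
    _ ≤ ENNReal.ofReal (2 * A ^ 2 * Real.exp ((2 * M - lam) * t)) :=
        ENNReal.ofReal_le_ofReal hsq
    _ = ENNReal.ofReal 2 * (eLpNorm T0 2 volume) ^ 2
        * ENNReal.ofReal (Real.exp ((2 * M - lam) * t)) := by
        rw [ENNReal.ofReal_mul (by positivity : (0:ℝ) ≤ 2 * A ^ 2),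
          ENNReal.ofReal_mul (by norm_num : (0:ℝ) ≤ 2)]
        congr 1
        rw [ENNReal.ofReal_pow hAnn, ENNReal.ofReal_toReal hafin]
end
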